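/- Let θ be an invertible antisymmetric real 4×4 matrix, g a symmetric positive definite real 4×4 matrix, e^σ := √(det θ · det g), and G := e^{−σ} θ g θᵀ. Then the matrix identity G g G = (1/2)·tr(G g)·G − g⁻¹ holds, where all products are matrix products. (This is the 4-dimensional identity (G g G)^{μν} = (1/2)(G g) G^{μν} − g^{μν}.) -/

import Mathlib

set_option maxHeartbeats 2000000

open Matrix

private lemma det4 (a00 a01 a02 a03 a10 a11 a12 a13 a20 a21 a22 a23 a30 a31 a32 a33 : ℝ) :
    (!![a00,a01,a02,a03; a10,a11,a12,a13; a20,a21,a22,a23; a30,a31,a32,a33]).det =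
    a00*(a11*(a22*a33-a23*a32) - a12*(a21*a33-a23*a31) + a13*(a21*a32-a22*a31))
    - a01*(a10*(a22*a33-a23*a32) - a12*(a20*a33-a23*a30) + a13*(a20*a32-a22*a30))
    + a02*(a10*(a21*a33-a23*a31) - a11*(a20*a33-a23*a30) + a13*(a20*a31-a21*a30))
    - a03*(a10*(a21*a32-a22*a31) - a11*(a20*a32-a22*a30) + a12*(a20*a31-a21*a30)) := by
  simp [Matrix.det_succ_row_zero, Fin.sum_univ_succ, Matrix.det_fin_three,
    Fin.succAbove, Fin.castSucc, Fin.castAdd, Fin.castLE]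
  ring

private lemma eta_fin_four (A : Matrix (Fin 4) (Fin 4) ℝ) :
    A = !![A 0 0, A 0 1, A 0 2, A 0 3;
           A 1 0, A 1 1, A 1 2, A 1 3;
           A 2 0, A 2 1, A 2 2, A 2 3;
           A 3 0, A 3 1, A 3 2, A 3 3] := by
  ext i j
  fin_cases i <;> fin_cases j <;> rfl

private lemma ext_fin4 {A B : Matrix (Fin 4) (Fin 4) ℝ}
    (h00 : A 0 0 = B 0 0) (h01 : A 0 1 = B 0 1) (h02 : A 0 2 = B 0 2) (h03 : A 0 3 = B 0 3)
    (h10 : A 1 0 = B 1 0) (h11 : A 1 1 = B 1 1) (h12 : A 1 2 = B 1 2) (h13 : A 1 3 = B 1 3)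
    (h20 : A 2 0 = B 2 0) (h21 : A 2 1 = B 2 1) (h22 : A 2 2 = B 2 2) (h23 : A 2 3 = B 2 3)
    (h30 : A 3 0 = B 3 0) (h31 : A 3 1 = B 3 1) (h32 : A 3 2 = B 3 2) (h33 : A 3 3 = B 3 3) :
    A = B := by
  ext i j
  fin_cases i <;> fin_cases j <;> assumption

private lemma antisym_eta (θ : Matrix (Fin 4) (Fin 4) ℝ) (hθ : θᵀ = -θ) :
    θ = !![0, θ 0 1, θ 0 2, θ 0 3;
           -θ 0 1, 0, θ 1 2, θ 1 3;
           -θ 0 2, -θ 1 2, 0, θ 2 3;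
           -θ 0 3, -θ 1 3, -θ 2 3, 0] := by
  have e : ∀ i j, θ j i = -θ i j := fun i j => by
    have := congrFun (congrFun hθ i) j
    simpa [Matrix.transpose_apply] using this
  have h00 : θ 0 0 = 0 := by linarith [e 0 0]
  have h11 : θ 1 1 = 0 := by linarith [e 1 1]
  have h22 : θ 2 2 = 0 := by linarith [e 2 2]
  have h33 : θ 3 3 = 0 := by linarith [e 3 3]
  conv_lhs => rw [eta_fin_four θ]
  rw [h00, h11, h22, h33, e 0 1, e 0 2, e 0 3, e 1 2, e 1 3, e 2 3]

set_option maxHeartbeats 10000000 in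
/-- The quartic Cayley–Hamilton-type identity for an explicit antisymmetric 4×4 matrix. -/
private lemma quartic4A (a b c d e f : ℝ) :
    (!![0,a,b,c; -a,0,d,e; -b,-d,0,f; -c,-e,-f,0] : Matrix (Fin 4) (Fin 4) ℝ) *
      !![0,a,b,c; -a,0,d,e; -b,-d,0,f; -c,-e,-f,0] *
      (!![0,a,b,c; -a,0,d,e; -b,-d,0,f; -c,-e,-f,0] *
        !![0,a,b,c; -a,0,d,e; -b,-d,0,f; -c,-e,-f,0])
      + (!![0,a,b,c; -a,0,d,e; -b,-d,0,f; -c,-e,-f,0] : Matrix (Fin 4) (Fin 4) ℝ).det •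
          (1 : Matrix (Fin 4) (Fin 4) ℝ)
    = (((!![0,a,b,c; -a,0,d,e; -b,-d,0,f; -c,-e,-f,0] : Matrix (Fin 4) (Fin 4) ℝ) *
          !![0,a,b,c; -a,0,d,e; -b,-d,0,f; -c,-e,-f,0]).trace / 2) •
        ((!![0,a,b,c; -a,0,d,e; -b,-d,0,f; -c,-e,-f,0] : Matrix (Fin 4) (Fin 4) ℝ) *
          !![0,a,b,c; -a,0,d,e; -b,-d,0,f; -c,-e,-f,0]) := by
  rw [det4]
  apply ext_fin4 <;>
    (simp only [Matrix.mul_apply, Matrix.trace, Matrix.diag, Fin.sum_univ_four,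
      Matrix.add_apply, Matrix.smul_apply, smul_eq_mul, Matrix.one_apply,
      Matrix.cons_val_zero, Matrix.cons_val_one, Matrix.head_cons, Matrix.cons_val_fin_one,
      Matrix.cons_val', Matrix.empty_val', Matrix.head_fin_const,
      Matrix.cons_val_two, Matrix.cons_val_three, Matrix.tail_cons, Fin.reduceEq, Matrix.cons_val, Matrix.of_apply,
      if_true, if_false]
     norm_num
     try ring)

/-- The quartic identity for an arbitrary antisymmetric 4×4 matrix. -/
private lemma quarticA (A : Matrix (Fin 4) (Fin 4) ℝ) (hA : Aᵀ = -A) :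
    A * A * (A * A) + A.det • (1 : Matrix (Fin 4) (Fin 4) ℝ)
      = ((A * A).trace / 2) • (A * A) := by
  rw [antisym_eta A hA]
  exact quartic4A (A 0 1) (A 0 2) (A 0 3) (A 1 2) (A 1 3) (A 2 3)

private lemma detθ_pos (θ : Matrix (Fin 4) (Fin 4) ℝ) (hθ : θᵀ = -θ) (hθu : IsUnit θ) :
    0 < θ.det := by
  have hsq : θ.det = (θ 0 1 * θ 2 3 - θ 0 2 * θ 1 3 + θ 0 3 * θ 1 2)^2 := by
    conv_lhs => rw [antisym_eta θ hθ, det4]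
    ring
  have hne : θ.det ≠ 0 := by
    intro h
    have := (Matrix.isUnit_iff_isUnit_det θ).mp hθu
    rw [h] at this
    exact (by simpa using this : False)
  rw [hsq] at hne ⊢
  exact lt_of_le_of_ne (sq_nonneg _) (Ne.symm hne)

open scoped MatrixOrder in
/-- The quartic identity for `Z = θ g` with `θ` antisymmetric and `g` positive definite,
obtained from the antisymmetric case by conjugating with `√g`. -/
private lemma quartic (θ g : Matrix (Fin 4) (Fin 4) ℝ) (hθ : θᵀ = -θ) (hg : g.PosDef) :
    (θ*g)*(θ*g)*((θ*g)*(θ*g)) + (θ.det * g.det) • (1 : Matrix (Fin 4) (Fin 4) ℝ) =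
      (((θ*g)*(θ*g)).trace/2) • ((θ*g)*(θ*g)) := by
  set S := CFC.sqrt g with hSdef
  have hS : S * S = g := CFC.sqrt_mul_sqrt_self g hg.posSemidef.nonneg
  have hSsym : Sᵀ = S := by
    have : S.IsHermitian := (CFC.sqrt_nonneg g).posSemidef.1
    simpa [Matrix.IsHermitian] using this
  have hdetS : S.det * S.det = g.det := by
    have := congrArg Matrix.det hS
    rwa [Matrix.det_mul] at this
  have hSu : IsUnit S.det := by
    refine isUnit_iff_ne_zero.mpr fun h => ?_
    have := hg.det_pos
    rw [← hdetS, h, mul_zero] at this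
    exact lt_irrefl _ this
  have hSS' : S * S⁻¹ = 1 := Matrix.mul_nonsing_inv S hSu
  have hS'S : S⁻¹ * S = 1 := Matrix.nonsing_inv_mul S hSu
  have cancelS : ∀ X : Matrix (Fin 4) (Fin 4) ℝ, S * (S⁻¹ * X) = X := fun X => by
    rw [← Matrix.mul_assoc, hSS', Matrix.one_mul]
  set A := S * θ * S with hAdef
  have hAanti : Aᵀ = -A := by
    rw [hAdef, Matrix.transpose_mul, Matrix.transpose_mul, hSsym, hθ]
    simp [Matrix.mul_assoc, Matrix.neg_mul, Matrix.mul_neg]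
  have hdetA : A.det = θ.det * g.det := by
    rw [hAdef, Matrix.det_mul, Matrix.det_mul, ← hdetS]
    ring
  have hZ : θ * g = S⁻¹ * (A * S) := by
    rw [hAdef]
    simp only [Matrix.mul_assoc, cancelS]
    rw [← Matrix.mul_assoc S⁻¹ S, hS'S, Matrix.one_mul, ← hS]
  have QA := quarticA A hAanti
  have QAc := congrArg (fun M => S⁻¹ * M * S) QA
  simp only [Matrix.mul_add, Matrix.add_mul, Matrix.mul_smul, Matrix.smul_mul,
    Matrix.mul_one, Matrix.one_mul, Matrix.mul_assoc, hS'S] at QAc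
  have htr : (S⁻¹ * (A * (A * S))).trace = (A * A).trace := by
    rw [Matrix.trace_mul_comm]
    simp only [Matrix.mul_assoc, hSS', Matrix.mul_one]
  rw [hZ]
  simp only [Matrix.mul_assoc, cancelS]
  rw [htr, ← hdetA]
  exact QAc

/-- The 4-dimensional identity `(G g G)^{μν} = (1/2)(G g) G^{μν} − g^{μν}` for the
effective metric `G = e^{-σ} θ g θᵀ`, `e^σ = √(det θ · det g)`. -/
theorem GgG_identity
    (θ g G : Matrix (Fin 4) (Fin 4) ℝ)
    (hθ : θᵀ = -θ) (hθu : IsUnit θ) (hg : g.PosDef)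
    (hG : G = (Real.sqrt (θ.det * g.det))⁻¹ • (θ * g * θᵀ)) :
    G * g * G = ((G * g).trace / 2) • G - g⁻¹ := by
  have hdg : 0 < g.det := hg.det_pos
  have hdθ : 0 < θ.det := detθ_pos θ hθ hθu
  have hD : 0 < θ.det * g.det := mul_pos hdθ hdg
  set t := Real.sqrt (θ.det * g.det) with ht
  have ht0 : t ≠ 0 := ne_of_gt (Real.sqrt_pos.mpr hD)
  have htt : t * t = θ.det * g.det := Real.mul_self_sqrt hD.le
  have hgu : IsUnit g.det := isUnit_iff_ne_zero.mpr (ne_of_gt hdg)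
  have hginv : g * g⁻¹ = 1 := Matrix.mul_nonsing_inv g hgu
  have Q := quartic θ g hθ hg
  have Q' := congrArg (· * g⁻¹) Q
  simp only [Matrix.add_mul, Matrix.smul_mul, Matrix.one_mul, Matrix.mul_assoc, hginv,
    Matrix.mul_one] at Q'
  have key : (θ*g*θ) * g * (θ*g*θ) =
      (((θ*g*θ) * g).trace/2) • (θ*g*θ) - (θ.det * g.det) • g⁻¹ := by
    rw [eq_sub_iff_add_eq]
    simp only [Matrix.mul_assoc]
    exact Q'
  have hGN : G = (-t⁻¹) • (θ*g*θ) := by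
    rw [hG, hθ, Matrix.mul_neg, smul_neg, ← neg_smul]
  rw [hGN]
  simp only [Matrix.smul_mul, Matrix.mul_smul, smul_smul, Matrix.trace_smul, smul_eq_mul]
  rw [key]
  rw [smul_sub, smul_smul, smul_smul]
  have hone : -t⁻¹ * -t⁻¹ * (θ.det * g.det) = 1 := by
    field_simp
    linarith [htt]
  rw [hone, one_smul]
  congr 1
  congr 1
  ring
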